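/- Let p,q ∈ (0,∞) with q ≤ p, let K, K' ⊆ closure(Λ₊) be compact, and let g ∈ Hol_{K'}(E×F_ℂ) with g_0 ∈ L^q(𝒩). For ε > 0 and f ∈ Hol_K(E×F_ℂ) define B^{q,g}_{ε,f} := {(ζ,x) ∈ 𝒩 : |f_0(ζ,x)| ≤ ε ‖f_0 · L_{(ζ,x)}g_0‖_{L^q(𝒩)}}. Then there is a constant C > 0 such that ‖χ_{B^{q,g}_{ε,f}} f_0‖_{L^p(𝒩)} ≤ C ε ‖f_0‖_{L^p(𝒩)} for every ε > 0 and every f ∈ ℬ^p_K(𝒩). -/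

import Mathlib

open MeasureTheory Complex Filter Set
open scoped RealInnerProductSpace ENNReal NNReal Pointwise Classical

noncomputable section

namespace Siegel

/-! Measure-theoretic instances for complex Euclidean space. -/

instance (n : ℕ) : MeasurableSpace (EuclideanSpace ℂ (Fin n)) :=
  MeasurableSpace.comap WithLp.ofLp MeasurableSpace.pi
instance (n : ℕ) : BorelSpace (EuclideanSpace ℂ (Fin n)) := PiLp.borelSpace _
noncomputable instance (n : ℕ) : InnerProductSpace ℝ (EuclideanSpace ℂ (Fin n)) :=
  InnerProductSpace.rclikeToReal ℂ _

/-- The complex Hilbert space `E` of dimension `n`. -/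
abbrev E (n : ℕ) := EuclideanSpace ℂ (Fin n)
/-- The real Hilbert space `F` of dimension `m`, identified with its dual `F'`. -/
abbrev F (m : ℕ) := EuclideanSpace ℝ (Fin m)
/-- The complexification `F_ℂ` of `F`. -/
abbrev FC (m : ℕ) := EuclideanSpace ℂ (Fin m)
/-- The ambient complex space `E × F_ℂ`. -/
abbrev X (n m : ℕ) := E n × FC m
/-- The Siegel CR manifold `𝒩 = E × F`. -/
abbrev N (n m : ℕ) := E n × F m

def rePart {m : ℕ} (z : FC m) : F m := WithLp.toLp 2 fun k => (z k).re
def imPart {m : ℕ} (z : FC m) : F m := WithLp.toLp 2 fun k => (z k).im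
def toC {m : ℕ} (x : F m) : FC m := WithLp.toLp 2 fun k => (x k : ℂ)

/-- `Φ : E × E → F_ℂ` is a hermitian map: `ℂ`-linear in the first variable and
conjugate-symmetric. -/
structure IsHermitianMap {n m : ℕ} (Φ : E n → E n → FC m) : Prop where
  add_left : ∀ ζ₁ ζ₂ ζ', Φ (ζ₁ + ζ₂) ζ' = Φ ζ₁ ζ' + Φ ζ₂ ζ'
  smul_left : ∀ (c : ℂ) ζ ζ', Φ (c • ζ) ζ' = c • Φ ζ ζ'
  conj_symm : ∀ ζ ζ' k, Φ ζ' ζ k = starRingEnd ℂ (Φ ζ ζ' k)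

/-- `Φ(ζ) := Φ(ζ,ζ)`, a real vector since `Φ` is hermitian. -/
def phiQ {n m : ℕ} (Φ : E n → E n → FC m) (ζ : E n) : F m := rePart (Φ ζ ζ)

/-- The open convex cone `Λ₊ = {λ ∈ F' : ⟨λ, Φ(ζ)⟩ > 0 for all ζ ≠ 0}`. -/
def Lambda {n m : ℕ} (Φ : E n → E n → FC m) : Set (F m) :=
  {l | ∀ ζ : E n, ζ ≠ 0 → 0 < ⟪l, phiQ Φ ζ⟫}

/-- `ρ(ζ,z) = Im z − Φ(ζ)`. -/
def rho {n m : ℕ} (Φ : E n → E n → FC m) (p : X n m) : F m := imPart p.2 - phiQ Φ p.1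

/-- The support function `H_K(h) = sup_{λ ∈ −K} ⟨λ,h⟩`. -/
def HK {m : ℕ} (K : Set (F m)) (h : F m) : ℝ := sSup ((fun l : F m => -⟪l, h⟫) '' K)

/-- The point `(ζ, x + iΦ(ζ) + ih)` of `E × F_ℂ` attached to `(ζ,x) ∈ 𝒩` and `h ∈ F`;
for a function `f` on `E × F_ℂ`, `f_h = f ∘ liftN Φ h`. -/
def liftN {n m : ℕ} (Φ : E n → E n → FC m) (h : F m) (w : N n m) : X n m :=
  (w.1, toC w.2 + Complex.I • toC (phiQ Φ w.1 + h))

/-- The group product on `𝒩`: `(ζ,x)(ζ',x') = (ζ+ζ', x+x'+2 Im Φ(ζ,ζ'))`. -/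
def mulN {n m : ℕ} (Φ : E n → E n → FC m) (a b : N n m) : N n m :=
  (a.1 + b.1, a.2 + b.2 + (2:ℝ) • imPart (Φ a.1 b.1))

def invN {n m : ℕ} (a : N n m) : N n m := (-a.1, -a.2)

/-- The group product on `E × F_ℂ`: `(ζ,z)(ζ',z') = (ζ+ζ', z+z'+2iΦ(ζ',ζ))`. -/
def mulX {n m : ℕ} (Φ : E n → E n → FC m) (a b : X n m) : X n m :=
  (a.1 + b.1, a.2 + b.2 + (2 * Complex.I) • Φ b.1 a.1)

def invX {n m : ℕ} (Φ : E n → E n → FC m) (a : X n m) : X n m :=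
  (-a.1, -a.2 + (2 * Complex.I) • Φ a.1 a.1)

/-- Left translate of a function on `𝒩`: `L_w g = g(w⁻¹ ·)`. -/
def LtN {n m : ℕ} (Φ : E n → E n → FC m) (w : N n m) (g : N n m → ℂ) : N n m → ℂ :=
  fun v => g (mulN Φ (invN w) v)

/-- Left translate of a function on `E × F_ℂ`. -/
def LtX {n m : ℕ} (Φ : E n → E n → FC m) (a : X n m) (f : X n m → ℂ) : X n m → ℂ :=
  fun x => f (mulX Φ (invX Φ a) x)

/-- The dilations `t·(ζ,x) = (t^{1/2} ζ, t x)` on `𝒩`. -/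
def dilN {n m : ℕ} (t : ℝ) (a : N n m) : N n m := ((Real.sqrt t : ℂ) • a.1, t • a.2)

/-- The homogeneity parameter: `θ = 1/2` if `n > 0`, `θ = 1` if `n = 0`. -/
def theta (n : ℕ) : ℝ := if n = 0 then 1 else 1/2

/-- `d_𝒩` is a left-invariant `θ`-homogeneous distance on `𝒩` (inducing the usual
topology, with compact closed balls). -/
structure IsHomDist {n m : ℕ} (Φ : E n → E n → FC m) (dN : N n m → N n m → ℝ) : Prop where
  symm : ∀ a b, dN a b = dN b a
  triangle : ∀ a b c, dN a c ≤ dN a b + dN b c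
  eq_zero_iff : ∀ a b, dN a b = 0 ↔ a = b
  continuous : Continuous fun q : N n m × N n m => dN q.1 q.2
  compact_closedBall : ∀ a r, IsCompact {b | dN a b ≤ r}
  left_invariant : ∀ g a b, dN (mulN Φ g a) (mulN Φ g b) = dN a b
  homogeneous : ∀ t : ℝ, 0 < t → ∀ a b, dN (dilN t a) (dilN t b) = t ^ theta n * dN a b

/-- The distance `d` on `E × F_ℂ`. -/
def dX {n m : ℕ} (Φ : E n → E n → FC m) (dN : N n m → N n m → ℝ) (p q : X n m) : ℝ :=
  max (dN (p.1, rePart p.2) (q.1, rePart q.2)) (dist (rho Φ p) (rho Φ q))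

/-- Closed ball for the distance `d`. -/
def cBall {n m : ℕ} (Φ : E n → E n → FC m) (dN : N n m → N n m → ℝ) (p : X n m) (R : ℝ) :
    Set (X n m) := {q | dX Φ dN p q ≤ R}

/-- Open ball for the distance `d`. -/
def oBall {n m : ℕ} (Φ : E n → E n → FC m) (dN : N n m → N n m → ℝ) (p : X n m) (R : ℝ) :
    Set (X n m) := {q | dX Φ dN p q < R}

/-- `M_R(μ)(ζ,z) = μ(B̄((ζ,z),R))`. -/
def MR {n m : ℕ} (Φ : E n → E n → FC m) (dN : N n m → N n m → ℝ) (μ : Measure (X n m))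
    (R : ℝ) (p : X n m) : ℝ≥0∞ := μ (cBall Φ dN p R)

/-- `M_{K,R}(μ) = M_R(e^{H_K ∘ ρ}·μ)`. -/
def MKR {n m : ℕ} (Φ : E n → E n → FC m) (dN : N n m → N n m → ℝ) (K : Set (F m))
    (μ : Measure (X n m)) (R : ℝ) (p : X n m) : ℝ≥0∞ :=
  ∫⁻ q in cBall Φ dN p R, ENNReal.ofReal (Real.exp (HK K (rho Φ q))) ∂μ

/-- The support of a measure. -/
def suppM {α : Type*} [TopologicalSpace α] [MeasurableSpace α] (μ : Measure α) : Set α :=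
  {x | ∀ U : Set α, x ∈ U → IsOpen U → 0 < μ U}

/-- The (tempered) distribution `f` on `F` has Fourier transform supported in `K`. -/
def FTSuppIn {m : ℕ} (K : Set (F m)) (g : F m → ℂ) : Prop :=
  ∀ φ : SchwartzMap (F m) ℂ, Disjoint (tsupport ⇑φ) K →
    ∫ x, g x * VectorFourier.fourierIntegral Real.fourierChar volume (innerₗ (F m)) (⇑φ) x = 0

/-- `Hol_K(E × F_ℂ)`: entire functions with polynomial growth relative to `e^{H_K ∘ ρ}` whose
restriction to each slice has spectrum in `K`. -/
def HolK {n m : ℕ} (Φ : E n → E n → FC m) (K : Set (F m)) (f : X n m → ℂ) : Prop :=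
  Differentiable ℂ f ∧
  (∃ C A : ℝ, 0 < C ∧ 0 < A ∧ ∀ p : X n m,
      ‖f p‖ ≤ C * (1 + ‖p.1‖ + ‖p.2‖) ^ A * Real.exp (HK K (rho Φ p))) ∧
  ∀ ζ : E n, FTSuppIn K fun x : F m => f (liftN Φ 0 (ζ, x))

/-- The Bernstein quasi-norm `‖f₀‖_{L^p(𝒩)}`. -/
def BNorm {n m : ℕ} (Φ : E n → E n → FC m) (p : ℝ≥0∞) (f : X n m → ℂ) : ℝ≥0∞ :=
  eLpNorm (fun w => f (liftN Φ 0 w)) p volume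

/-- Membership in the Bernstein space `ℬ^p_K(𝒩)`. -/
def MemB {n m : ℕ} (Φ : E n → E n → FC m) (K : Set (F m)) (p : ℝ≥0∞) (f : X n m → ℂ) : Prop :=
  HolK Φ K f ∧ BNorm Φ p f < ⊤

/-- `μ` is a `q`-Carleson measure for `ℬ^p_K(𝒩)`. -/
def Carleson {n m : ℕ} (Φ : E n → E n → FC m) (K : Set (F m)) (p q : ℝ≥0∞)
    (μ : Measure (X n m)) : Prop :=
  ∃ C : ℝ≥0∞, C < ⊤ ∧ ∀ f, MemB Φ K p f → eLpNorm f q μ ≤ C * BNorm Φ p f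

/-- `μ` is a compact `q`-Carleson measure for `ℬ^p_K(𝒩)`: the inclusion
`ℬ^p_K(𝒩) → L^q(μ)` is moreover a compact operator. -/
def CompactCarleson {n m : ℕ} (Φ : E n → E n → FC m) (K : Set (F m)) (p q : ℝ≥0∞)
    (μ : Measure (X n m)) : Prop :=
  Carleson Φ K p q μ ∧
  ∀ f : ℕ → X n m → ℂ, (∀ j, MemB Φ K p (f j) ∧ BNorm Φ p (f j) ≤ 1) →
    ∃ φ : ℕ → ℕ, StrictMono φ ∧
      ∀ ε : ℝ≥0∞, 0 < ε → ∃ N₀ : ℕ, ∀ j k, N₀ ≤ j → N₀ ≤ k →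
        eLpNorm (fun x => f (φ j) x - f (φ k) x) q μ ≤ ε

/-- `μ` is `p`-sampling for `ℬ^p_K(𝒩)`. -/
def Sampling {n m : ℕ} (Φ : E n → E n → FC m) (K : Set (F m)) (p : ℝ≥0∞)
    (μ : Measure (X n m)) : Prop :=
  Carleson Φ K p p μ ∧
  ∃ c : ℝ≥0∞, 0 < c ∧ ∀ f, MemB Φ K p f → c * BNorm Φ p f ≤ eLpNorm f p μ

/-- `μ` is strongly `p`-sampling for `ℬ^p_K(𝒩)`:
`ℬ^p_K(𝒩) = {f ∈ Hol_K : f ∈ L^p(μ)}`. -/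
def StronglySampling {n m : ℕ} (Φ : E n → E n → FC m) (K : Set (F m)) (p : ℝ≥0∞)
    (μ : Measure (X n m)) : Prop :=
  Sampling Φ K p μ ∧
  ∀ f, HolK Φ K f → eLpNorm f p μ < ⊤ → BNorm Φ p f < ⊤

/-- `K_ε = K + (B̄_{F'}(0,ε) ∩ closure Λ₊)`. -/
def Keps {n m : ℕ} (Φ : E n → E n → FC m) (K : Set (F m)) (ε : ℝ) : Set (F m) :=
  K + (Metric.closedBall 0 ε ∩ closure (Lambda Φ))

/-- `L^p` "norm" for `ℝ≥0∞`-valued functions, `p ∈ (0,∞]`. -/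
def lpENN {α : Type*} [MeasurableSpace α] (p : ℝ≥0∞) (μ : Measure α) (u : α → ℝ≥0∞) : ℝ≥0∞ :=
  if p = ∞ then essSup u μ else (∫⁻ a, u a ^ p.toReal ∂μ) ^ (1 / p.toReal)

/-- The mixed norm `‖h ↦ ‖u_h‖_{L^p(𝒩)}‖_{L^q(F)}` of `L^{p,q}(E × F_ℂ)`. -/
def mixedNorm {n m : ℕ} (Φ : E n → E n → FC m) (p q : ℝ≥0∞) (u : X n m → ℝ≥0∞) : ℝ≥0∞ :=
  lpENN q volume fun h : F m => lpENN p volume fun w : N n m => u (liftN Φ h w)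

/-- `u ∈ L^{p,q}_0(E × F_ℂ)`: `u` lies in the closure of the measurable step functions in
`L^{p,q}(E × F_ℂ)`. -/
def MemLpq0 {n m : ℕ} (Φ : E n → E n → FC m) (p q : ℝ≥0∞) (u : X n m → ℝ≥0∞) : Prop :=
  mixedNorm Φ p q u < ⊤ ∧
  ∀ ε : ℝ≥0∞, 0 < ε → ∃ s : SimpleFunc (X n m) ℝ≥0∞,
    mixedNorm Φ p q (fun w => (u w - s w) + (s w - u w)) ≤ ε

/-- `ℓ^p` "norm" of an `ℝ≥0∞`-valued family. -/
def lpSum {ι : Type*} (p : ℝ≥0∞) (b : ι → ℝ≥0∞) : ℝ≥0∞ :=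
  if p = ∞ then ⨆ i, b i else (∑' i, b i ^ p.toReal) ^ (1 / p.toReal)

/-- The mixed norm of `ℓ^{p,q}(J,K')`. -/
def mixedSum {J K' : Type*} (p q : ℝ≥0∞) (a : J → K' → ℝ≥0∞) : ℝ≥0∞ :=
  lpSum q fun k => lpSum p fun j => a j k

/-- Membership in `ℓ^{p,q}_0(J,K')` (closure of the finitely supported families). -/
def MemSum0 {J K' : Type*} (p q : ℝ≥0∞) (a : J → K' → ℝ≥0∞) : Prop :=
  mixedSum p q a < ⊤ ∧
  ∀ ε : ℝ≥0∞, 0 < ε → ∃ S : Finset (J × K'),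
    mixedSum p q (fun j k => if (j, k) ∈ S then 0 else a j k) ≤ ε

/-- A restricted `(δ,R)`-lattice on `E × F_ℂ`. -/
structure IsRestrictedLattice {n m : ℕ} (Φ : E n → E n → FC m) (dN : N n m → N n m → ℝ)
    (δ R : ℝ) {J K' : Type*} (z : J → K' → X n m) : Prop where
  disjoint : ∀ a b : J × K', a ≠ b →
    Disjoint (oBall Φ dN (z a.1 a.2) δ) (oBall Φ dN (z b.1 b.2) δ)
  cover : ∀ p : X n m, ∃ j k, p ∈ cBall Φ dN (z j k) (R * δ)
  rho_eq : ∀ j j' k, rho Φ (z j k) = rho Φ (z j' k)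

/-- The dual exponent: `t' = ∞` if `t ≤ 1`, `t' = t/(t−1)` otherwise. -/
def dualExp (t : ℝ≥0∞) : ℝ≥0∞ :=
  if t = ∞ then 1 else if t ≤ 1 then ∞ else ENNReal.ofReal (t.toReal / (t.toReal - 1))

/-- `L^r` norm on `E × F_ℂ` (w.r.t. Lebesgue measure) of an `ℝ≥0∞`-valued function. -/
def lpX {n m : ℕ} (r : ℝ≥0∞) (u : X n m → ℝ≥0∞) : ℝ≥0∞ := lpENN r volume u

/-- Membership in `L^r_0(E × F_ℂ)` (closure of the measurable step functions in `L^r`). -/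
def MemLpX0 {n m : ℕ} (r : ℝ≥0∞) (u : X n m → ℝ≥0∞) : Prop :=
  lpX r u < ⊤ ∧
  ∀ ε : ℝ≥0∞, 0 < ε → ∃ s : SimpleFunc (X n m) ℝ≥0∞,
    lpX r (fun w => (u w - s w) + (s w - u w)) ≤ ε

/-- The image of `μ` under left translation by `g ∈ E × F_ℂ`. -/
def translateX {n m : ℕ} (Φ : E n → E n → FC m) (g : X n m) (μ : Measure (X n m)) :
    Measure (X n m) := Measure.map (fun x => mulX Φ g x) μ

/-- `ν ∈ W(μ)`: `ν` is in the vague closure of the set of left translates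
`L_{(ζ,x+iΦ(ζ))}μ`, `(ζ,x) ∈ 𝒩`. -/
def InW {n m : ℕ} (Φ : E n → E n → FC m) (μ ν : Measure (X n m)) : Prop :=
  ∀ (k : ℕ) (φ : Fin k → X n m → ℝ),
    (∀ i, Continuous (φ i) ∧ HasCompactSupport (φ i)) →
    ∀ ε : ℝ, 0 < ε → ∃ w : N n m, ∀ i,
      |(∫ x, φ i x ∂translateX Φ (liftN Φ 0 w) μ) - ∫ x, φ i x ∂ν| < ε

/-- `S` is a set of uniqueness for `ℬ^p_K(𝒩)`. -/
def UniqSet {n m : ℕ} (Φ : E n → E n → FC m) (K : Set (F m)) (p : ℝ≥0∞)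
    (S : Set (X n m)) : Prop :=
  ∀ f, MemB Φ K p f → (∀ x ∈ S, f x = 0) → f = 0

/-- `μ'` is sparse. -/
def Sparse {n m : ℕ} (Φ : E n → E n → FC m) (dN : N n m → N n m → ℝ)
    (μ' : Measure (X n m)) : Prop :=
  ∃ R : ℝ, 0 < R ∧ ∀ ε : ℝ≥0∞, 0 < ε → ∃ R' : ℝ, 0 < R' ∧
    ∀ p : X n m, p ∉ oBall Φ dN (0, 0) R' → MR Φ dN μ' R p ≤ ε

/-- `B(supp μ, R)`: the union of the `d`-balls of radius `R` centred on the support of `μ`. -/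
def suppBall {n m : ℕ} (Φ : E n → E n → FC m) (dN : N n m → N n m → ℝ)
    (μ : Measure (X n m)) (R : ℝ) : Set (X n m) :=
  {q | ∃ x ∈ suppM μ, dX Φ dN x q < R}

/-- The polar `A° = {h ∈ F : ⟨λ,h⟩ ≥ −1 for all λ ∈ A}`. -/
def polar {m : ℕ} (A : Set (F m)) : Set (F m) := {h | ∀ l ∈ A, -1 ≤ ⟪l, h⟫}

/-- The determinant of the positive hermitian form `(ζ,ζ') ↦ ⟨λ, Φ(ζ,ζ')⟩` on `E`, computed
with respect to the (orthonormal) standard basis of `E`; `|Pf(λ)|` is its absolute value. -/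
def pfDet {n m : ℕ} (Φ : E n → E n → FC m) (l : F m) : ℂ :=
  Matrix.det (Matrix.of fun k k' : Fin n =>
    ∑ j, (l j : ℂ) * (Φ (EuclideanSpace.single k 1) (EuclideanSpace.single k' 1)) j)

/-! ### Auxiliary lemmas for statement 13 -/

section Aux13

variable {n m : ℕ} {Φ : E n → E n → FC m}

lemma real_smul_E (r : ℝ) (y : E n) : (r : ℂ) • y = r • y := by
  rw [← Complex.coe_algebraMap]; exact algebraMap_smul ℂ r y

lemma real_smul_FC (r : ℝ) (y : FC m) : (r : ℂ) • y = r • y := by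
  rw [← Complex.coe_algebraMap]; exact algebraMap_smul ℂ r y

lemma herm_addR (hΦ : IsHermitianMap Φ) (x y y' : E n) :
    Φ x (y + y') = Φ x y + Φ x y' := by
  ext k
  rw [hΦ.conj_symm (y + y') x k, hΦ.add_left]
  simp only [PiLp.add_apply, map_add]
  rw [← hΦ.conj_symm y x k, ← hΦ.conj_symm y' x k]

lemma herm_smulRr (hΦ : IsHermitianMap Φ) (r : ℝ) (x y : E n) :
    Φ x (r • y) = r • Φ x y := by
  ext k
  rw [← real_smul_E r y, hΦ.conj_symm ((r : ℂ) • y) x k, hΦ.smul_left]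
  simp only [PiLp.smul_apply, smul_eq_mul, map_mul, Complex.conj_ofReal]
  rw [← hΦ.conj_symm y x k, Complex.real_smul]

lemma herm_smulLr (hΦ : IsHermitianMap Φ) (r : ℝ) (x y : E n) :
    Φ (r • x) y = r • Φ x y := by
  rw [← real_smul_E r x, hΦ.smul_left, real_smul_FC]

/-- `Φ` as an `ℝ`-linear map in the second variable. -/
def hermB1 (hΦ : IsHermitianMap Φ) (x : E n) : E n →ₗ[ℝ] FC m where
  toFun y := Φ x y
  map_add' := herm_addR hΦ x
  map_smul' r y := herm_smulRr hΦ r x y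

lemma herm_cont (hΦ : IsHermitianMap Φ) :
    Continuous fun pr : E n × E n => Φ pr.1 pr.2 := by
  let L : E n →ₗ[ℝ] (E n →L[ℝ] FC m) :=
    { toFun := fun x => (hermB1 hΦ x).toContinuousLinearMap
      map_add' := fun x x' => by
        ext y
        simp [hermB1, hΦ.add_left]
      map_smul' := fun r x => by
        ext y
        simp [hermB1, herm_smulLr hΦ] }
  exact L.toContinuousLinearMap.continuous₂

lemma continuous_rePart : Continuous (rePart : FC m → F m) :=
  LinearMap.continuous_of_finiteDimensional
    ({ toFun := rePart
       map_add' := fun z z' => by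
         ext k; simp [rePart]
       map_smul' := fun r z => by
         ext k; simp [rePart, Complex.real_smul, Complex.mul_re] } : FC m →ₗ[ℝ] F m)

lemma continuous_imPart : Continuous (imPart : FC m → F m) :=
  LinearMap.continuous_of_finiteDimensional
    ({ toFun := imPart
       map_add' := fun z z' => by
         ext k; simp [imPart]
       map_smul' := fun r z => by
         ext k; simp [imPart, Complex.real_smul, Complex.mul_im] } : FC m →ₗ[ℝ] F m)

lemma continuous_toC : Continuous (toC : F m → FC m) :=
  LinearMap.continuous_of_finiteDimensional
    ({ toFun := toC
       map_add' := fun z z' => by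
         ext k; simp [toC]
       map_smul' := fun r z => by
         ext k; simp [toC, Complex.real_smul] } : F m →ₗ[ℝ] FC m)

lemma continuous_liftN (hΦ : IsHermitianMap Φ) (h : F m) : Continuous (liftN Φ h) := by
  unfold liftN
  refine continuous_fst.prodMk ?_
  refine ((continuous_toC.comp continuous_snd).add ?_)
  refine Continuous.fun_const_smul ?_ _
  refine continuous_toC.comp ?_
  refine Continuous.add ?_ continuous_const
  exact (continuous_rePart.comp ((herm_cont hΦ).comp (continuous_fst.prodMk continuous_fst)))

lemma continuous_mulN (hΦ : IsHermitianMap Φ) :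
    Continuous fun z : N n m × N n m => mulN Φ z.1 z.2 := by
  unfold mulN
  refine Continuous.prodMk ?_ ?_
  · exact (continuous_fst.comp continuous_fst).add (continuous_fst.comp continuous_snd)
  · refine Continuous.add ?_ ?_
    · exact (continuous_snd.comp continuous_fst).add (continuous_snd.comp continuous_snd)
    · refine Continuous.fun_const_smul ?_ _
      exact continuous_imPart.comp ((herm_cont hΦ).comp
        ((continuous_fst.comp continuous_fst).prodMk (continuous_fst.comp continuous_snd)))

lemma measurePreserving_shear (a : E n) (c : E n → F m) (hc : Measurable c) :
    MeasurePreserving (fun z : N n m => (z.1 + a, z.2 + c z.1)) volume volume := by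
  rw [Measure.volume_eq_prod]
  exact MeasurePreserving.skew_product (g := fun x y => y + c x)
    (measurePreserving_add_right volume a)
    (by exact measurable_snd.add (hc.comp measurable_fst))
    (Filter.Eventually.of_forall fun x => map_add_right_eq_self volume (c x))

lemma imPart_phi_self (hΦ : IsHermitianMap Φ) (ζ : E n) : imPart (Φ ζ ζ) = 0 := by
  ext k
  have h := hΦ.conj_symm ζ ζ k
  have h2 := congrArg Complex.im h
  simp only [Complex.conj_im] at h2
  have : (Φ ζ ζ k).im = 0 := by linarith
  simp [imPart, this]

lemma phi_neg_left (hΦ : IsHermitianMap Φ) (x y : E n) : Φ (-x) y = -Φ x y := by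
  have := hΦ.smul_left (-1 : ℂ) x y
  simpa [neg_one_smul] using this

lemma imPart_add (z z' : FC m) : imPart (z + z') = imPart z + imPart z' := by
  ext k; simp [imPart]

lemma imPart_neg (z : FC m) : imPart (-z) = -imPart z := by
  ext k; simp [imPart]

lemma invN_mulN (hΦ : IsHermitianMap Φ) (w u : N n m) :
    mulN Φ (invN w) (mulN Φ w u) = u := by
  obtain ⟨u1, u2⟩ := u
  unfold mulN invN
  simp only [Prod.mk.injEq]
  constructor
  · exact neg_add_cancel_left _ _
  · rw [herm_addR hΦ, phi_neg_left hΦ, phi_neg_left hΦ, imPart_add, imPart_neg, imPart_neg,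
      imPart_phi_self hΦ]
    simp only [neg_zero, smul_add, smul_neg, smul_zero]
    abel

lemma measurePreserving_mulN_left (hΦ : IsHermitianMap Φ) (w : N n m) :
    MeasurePreserving (fun u : N n m => mulN Φ w u) volume volume := by
  have hc : Measurable fun x : E n => w.2 + (2 : ℝ) • imPart (Φ w.1 x) :=
    (continuous_const.add ((continuous_imPart.comp ((herm_cont hΦ).comp
      (continuous_const.prodMk continuous_id))).fun_const_smul _)).measurable
  have h := measurePreserving_shear w.1 _ hc
  have heq : (fun u : N n m => mulN Φ w u) =
      fun z : N n m => (z.1 + w.1, z.2 + (w.2 + (2 : ℝ) • imPart (Φ w.1 z.1))) := by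
    funext u
    unfold mulN
    rw [Prod.ext_iff]
    exact ⟨add_comm _ _, by abel⟩
  rw [heq]; exact h

lemma measurePreserving_mulN_right (hΦ : IsHermitianMap Φ) (u : N n m) :
    MeasurePreserving (fun w : N n m => mulN Φ w u) volume volume := by
  have hc : Measurable fun x : E n => u.2 + (2 : ℝ) • imPart (Φ x u.1) :=
    (continuous_const.add ((continuous_imPart.comp ((herm_cont hΦ).comp
      (continuous_id.prodMk continuous_const))).fun_const_smul _)).measurable
  have h := measurePreserving_shear u.1 _ hc
  have heq : (fun w : N n m => mulN Φ w u) =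
      fun z : N n m => (z.1 + u.1, z.2 + (u.2 + (2 : ℝ) • imPart (Φ z.1 u.1))) := by
    funext w
    unfold mulN
    rw [Prod.ext_iff]
    exact ⟨rfl, by abel⟩
  rw [heq]; exact h

/-- A Jensen/Hölder-type estimate for `ℝ≥0∞`-valued integrals. -/
lemma hoelder_aux {α : Type*} [MeasurableSpace α] (μ : Measure α) (A G : α → ℝ≥0∞)
    (hA : Measurable A) (hG : Measurable G) (r : ℝ) (hr : 1 ≤ r) :
    (∫⁻ u, A u * G u ∂μ) ^ r ≤ (∫⁻ u, A u ^ r * G u ∂μ) * (∫⁻ u, G u ∂μ) ^ (r - 1) := by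
  rcases eq_or_lt_of_le hr with h1 | h1
  · simp [← h1]
  · have hr0 : (0 : ℝ) < r := lt_trans one_pos h1
    set s : ℝ := r / (r - 1) with hs
    have hconj : r.HolderConjugate s := Real.HolderConjugate.conjExponent h1
    have hs0 : (0 : ℝ) < s := hconj.symm.pos
    have e1 : ∀ u, (A u * G u ^ (1 / r)) ^ r = A u ^ r * G u := by
      intro u
      rw [ENNReal.mul_rpow_of_nonneg _ _ hr0.le, ← ENNReal.rpow_mul,
        one_div_mul_cancel hr0.ne', ENNReal.rpow_one]
    have e2 : ∀ u, (G u ^ (1 / s)) ^ s = G u := by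
      intro u
      rw [← ENNReal.rpow_mul, one_div_mul_cancel hs0.ne', ENNReal.rpow_one]
    have h2 : (∫⁻ u, A u * G u ∂μ) ≤
        (∫⁻ u, A u ^ r * G u ∂μ) ^ (1 / r) * (∫⁻ u, G u ∂μ) ^ (1 / s) := by
      have hh := ENNReal.lintegral_mul_le_Lp_mul_Lq μ hconj
        (f := fun u => A u * G u ^ (1 / r)) (g := fun u => G u ^ (1 / s))
        ((hA.mul (hG.pow_const _)).aemeasurable) ((hG.pow_const _).aemeasurable)
      have hint : (∫⁻ u, A u * G u ∂μ) =
          ∫⁻ u, ((fun u => A u * G u ^ (1 / r)) * fun u => G u ^ (1 / s)) u ∂μ := by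
        apply lintegral_congr
        intro u
        simp only [Pi.mul_apply]
        rw [mul_assoc, ← ENNReal.rpow_add_of_nonneg _ _ (by positivity) (by positivity)]
        rw [show 1 / r + 1 / s = 1 by
          rw [one_div, one_div]; exact hconj.inv_add_inv_eq_one]
        rw [ENNReal.rpow_one]
      calc (∫⁻ u, A u * G u ∂μ)
          = ∫⁻ u, ((fun u => A u * G u ^ (1 / r)) * fun u => G u ^ (1 / s)) u ∂μ := hint
        _ ≤ (∫⁻ u, (A u * G u ^ (1 / r)) ^ r ∂μ) ^ (1 / r) *
              (∫⁻ u, (G u ^ (1 / s)) ^ s ∂μ) ^ (1 / s) := hh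
        _ = (∫⁻ u, A u ^ r * G u ∂μ) ^ (1 / r) * (∫⁻ u, G u ∂μ) ^ (1 / s) := by
              rw [lintegral_congr fun u => e1 u, lintegral_congr fun u => e2 u]
    have h3 := ENNReal.rpow_le_rpow h2 hr0.le
    rwa [ENNReal.mul_rpow_of_nonneg _ _ hr0.le, ← ENNReal.rpow_mul, ← ENNReal.rpow_mul,
      one_div_mul_cancel hr0.ne', ENNReal.rpow_one,
      show 1 / s * r = r - 1 by
        rw [hs]; field_simp] at h3

end Aux13

/-- the `L^p` norm of `f₀` over the set `B^{q,g}_{ε,f}` where `|f₀|` is dominated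
by `ε ‖f₀ · L_{(ζ,x)}g₀‖_{L^q}` is at most `Cε‖f₀‖_{L^p}`. -/
theorem statement13 {n m : ℕ} (Φ : E n → E n → FC m)
    (hΦ : IsHermitianMap Φ) (hΛ : (Lambda Φ).Nonempty)
    (p q : ℝ) (hq : 0 < q) (hqp : q ≤ p)
    (K K' : Set (F m)) (hKsub : K ⊆ closure (Lambda Φ)) (hK : IsCompact K)
    (hK'sub : K' ⊆ closure (Lambda Φ)) (hK' : IsCompact K')
    (g : X n m → ℂ) (hg : HolK Φ K' g)
    (hgq : eLpNorm (fun v : N n m => g (liftN Φ 0 v)) (ENNReal.ofReal q) volume < ⊤) :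
    ∃ C : ℝ, 0 < C ∧
      ∀ ε : ℝ, 0 < ε → ∀ f : X n m → ℂ, MemB Φ K (ENNReal.ofReal p) f →
        eLpNorm
            (Set.indicator
              {w : N n m | (‖f (liftN Φ 0 w)‖₊ : ℝ≥0∞) ≤
                ENNReal.ofReal ε *
                  eLpNorm (fun v : N n m =>
                    f (liftN Φ 0 v) * LtN Φ w (fun v' => g (liftN Φ 0 v')) v)
                    (ENNReal.ofReal q) volume}
              (fun w : N n m => f (liftN Φ 0 w)))
            (ENNReal.ofReal p) volume ≤
          ENNReal.ofReal (C * ε) *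
            eLpNorm (fun w : N n m => f (liftN Φ 0 w)) (ENNReal.ofReal p) volume := by
  have hp : 0 < p := lt_of_lt_of_le hq hqp
  have hq0 : (ENNReal.ofReal q) ≠ 0 := (ENNReal.ofReal_pos.mpr hq).ne'
  have hqt : (ENNReal.ofReal q) ≠ ∞ := ENNReal.ofReal_ne_top
  have hp0 : (ENNReal.ofReal p) ≠ 0 := (ENNReal.ofReal_pos.mpr hp).ne'
  have hpt : (ENNReal.ofReal p) ≠ ∞ := ENNReal.ofReal_ne_top
  have hqr : (ENNReal.ofReal q).toReal = q := ENNReal.toReal_ofReal hq.le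
  have hpr : (ENNReal.ofReal p).toReal = p := ENNReal.toReal_ofReal hp.le
  have hΦc : Continuous fun pr : E n × E n => Φ pr.1 pr.2 := herm_cont hΦ
  have hlift : Continuous (liftN Φ (0 : F m)) := continuous_liftN hΦ 0
  have hmulNc : Continuous fun z : N n m × N n m => mulN Φ z.1 z.2 := continuous_mulN hΦ
  haveI : OpensMeasurableSpace (N n m × N n m) :=
    @BorelSpace.opensMeasurable _ _ _ Prod.borelSpace
  have hg0c : Continuous fun v : N n m => g (liftN Φ 0 v) := hg.1.continuous.comp hlift
  set G : N n m → ℝ≥0∞ := fun v => (‖g (liftN Φ 0 v)‖₊ : ℝ≥0∞) ^ q with hGdef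
  have hGm : Measurable G :=
    ((ENNReal.continuous_rpow_const (y := q)).measurable).comp hg0c.measurable.enorm
  have hGfin : ∀ u, G u ≠ ⊤ := fun u =>
    ENNReal.rpow_ne_top_of_nonneg hq.le ENNReal.coe_ne_top
  set IG : ℝ≥0∞ := ∫⁻ v, G v with hIGdef
  have hIGne : IG ≠ ⊤ := by
    have h := hgq
    rw [eLpNorm_eq_lintegral_rpow_enorm_toReal hq0 hqt, hqr] at h
    intro hcon
    have h2 : IG ^ (1/q) < ⊤ := h
    rw [hcon] at h2
    rw [ENNReal.top_rpow_of_pos (by positivity)] at h2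
    exact (lt_irrefl _ h2)
  have hfin' : IG ^ (1/q) ≠ ⊤ := ENNReal.rpow_ne_top_of_nonneg (by positivity) hIGne
  have hCle : IG ^ (1/q) ≤ ENNReal.ofReal ((IG ^ (1/q)).toReal + 1) := by
    calc IG ^ (1/q) = ENNReal.ofReal ((IG ^ (1/q)).toReal) :=
          (ENNReal.ofReal_toReal hfin').symm
      _ ≤ ENNReal.ofReal ((IG ^ (1/q)).toReal + 1) := ENNReal.ofReal_le_ofReal (by linarith)
  refine ⟨(IG ^ (1/q)).toReal + 1, by positivity, ?_⟩
  intro ε hε f hf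
  have hfc : Continuous fun v : N n m => f (liftN Φ 0 v) := hf.1.1.continuous.comp hlift
  set F0 : N n m → ℝ≥0∞ := fun v => (‖f (liftN Φ 0 v)‖₊ : ℝ≥0∞) with hF0def
  have hF0m : Measurable F0 := hfc.measurable.enorm
  set r : ℝ := p / q with hrdef
  have hr1 : 1 ≤ r := (one_le_div hq).mpr hqp
  have hr0 : (0:ℝ) < r := lt_of_lt_of_le one_pos hr1
  set conv : N n m → ℝ≥0∞ := fun w => ∫⁻ v, F0 v ^ q * G (mulN Φ (invN w) v) with hconvdef
  set IF : ℝ≥0∞ := ∫⁻ w, F0 w ^ p with hIFdef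
  have hIFeq : eLpNorm (fun w : N n m => f (liftN Φ 0 w)) (ENNReal.ofReal p) volume
      = IF ^ (1/p) := by
    rw [eLpNorm_eq_lintegral_rpow_enorm_toReal hp0 hpt, hpr]
    rfl
  -- Step A : the `L^q` norm of `f₀ ⋅ L_w g₀` equals `conv w ^ (1/q)`.
  have hA : ∀ w : N n m,
      eLpNorm (fun v : N n m =>
          f (liftN Φ 0 v) * LtN Φ w (fun v' => g (liftN Φ 0 v')) v)
        (ENNReal.ofReal q) volume = conv w ^ (1/q) := by
    intro w
    rw [eLpNorm_eq_lintegral_rpow_enorm_toReal hq0 hqt, hqr]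
    congr 1
    rw [show conv w = ∫⁻ v, F0 v ^ q * G (mulN Φ (invN w) v) from rfl]
    apply lintegral_congr
    intro v
    simp only [hF0def, hGdef, LtN, enorm_eq_nnnorm, nnnorm_mul, ENNReal.coe_mul,
      ENNReal.mul_rpow_of_nonneg _ _ hq.le]
  -- change of variables in `conv`
  have hcw : ∀ w : N n m, conv w = ∫⁻ u, F0 (mulN Φ w u) ^ q * G u := by
    intro w
    have hφm : Measurable fun v : N n m => F0 v ^ q * G (mulN Φ (invN w) v) :=
      (((ENNReal.continuous_rpow_const (y := q)).measurable).comp hF0m).mul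
        (hGm.comp (hmulNc.comp (continuous_const.prodMk continuous_id)).measurable)
    have h1 := (measurePreserving_mulN_left hΦ w).lintegral_comp
      (f := fun v : N n m => F0 v ^ q * G (mulN Φ (invN w) v)) hφm
    rw [show conv w = ∫⁻ v, F0 v ^ q * G (mulN Φ (invN w) v) from rfl, ← h1]
    apply lintegral_congr
    intro u
    simp only [invN_mulN hΦ]
  -- the key convolution estimate
  have key : (∫⁻ w, conv w ^ r) ≤ IF * IG ^ r := by
    have hstep : ∀ w : N n m,
        conv w ^ r ≤ (∫⁻ u, F0 (mulN Φ w u) ^ p * G u) * (∫⁻ u, G u) ^ (r - 1) := by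
      intro w
      rw [hcw w]
      have hmw : Continuous fun u : N n m => mulN Φ w u :=
        hmulNc.comp (continuous_const.prodMk continuous_id)
      have hAm : Measurable fun u : N n m => F0 (mulN Φ w u) ^ q :=
        ((ENNReal.continuous_rpow_const (y := q)).measurable).comp
          (hF0m.comp hmw.measurable)
      have hh := hoelder_aux volume (fun u : N n m => F0 (mulN Φ w u) ^ q) G hAm hGm r hr1
      have e3 : ∀ u : N n m, (F0 (mulN Φ w u) ^ q) ^ r = F0 (mulN Φ w u) ^ p := by
        intro u
        rw [← ENNReal.rpow_mul, show q * r = p by rw [hrdef]; field_simp]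
      calc (∫⁻ u, F0 (mulN Φ w u) ^ q * G u) ^ r
          ≤ (∫⁻ u, (F0 (mulN Φ w u) ^ q) ^ r * G u) * (∫⁻ u, G u) ^ (r - 1) := hh
        _ = (∫⁻ u, F0 (mulN Φ w u) ^ p * G u) * (∫⁻ u, G u) ^ (r - 1) := by
            congr 1
            exact lintegral_congr fun u => by rw [e3 u]
    calc (∫⁻ w, conv w ^ r)
        ≤ ∫⁻ w, (∫⁻ u, F0 (mulN Φ w u) ^ p * G u) * (∫⁻ u, G u) ^ (r - 1) :=
          lintegral_mono hstep
      _ = (∫⁻ w, ∫⁻ u, F0 (mulN Φ w u) ^ p * G u) * (∫⁻ u, G u) ^ (r - 1) :=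
          lintegral_mul_const' _ _
            (ENNReal.rpow_ne_top_of_nonneg (by linarith) hIGne)
      _ = (∫⁻ u, ∫⁻ w, F0 (mulN Φ w u) ^ p * G u) * (∫⁻ u, G u) ^ (r - 1) := by
          congr 1
          refine lintegral_lintegral_swap (Measurable.aemeasurable ?_)
          exact (((ENNReal.continuous_rpow_const (y := p)).measurable).comp
            (hF0m.comp hmulNc.measurable)).mul (hGm.comp measurable_snd)
      _ = (∫⁻ u, (∫⁻ w, F0 (mulN Φ w u) ^ p) * G u) * (∫⁻ u, G u) ^ (r - 1) := by
          congr 1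
          exact lintegral_congr fun u => lintegral_mul_const' _ _ (hGfin u)
      _ = (∫⁻ u, IF * G u) * (∫⁻ u, G u) ^ (r - 1) := by
          congr 1
          apply lintegral_congr
          intro u
          congr 1
          have hmp := measurePreserving_mulN_right hΦ u
          have h2 : (∫⁻ w, F0 (mulN Φ w u) ^ p) = ∫⁻ w, F0 w ^ p :=
            hmp.lintegral_comp (f := fun w => F0 w ^ p)
              (((ENNReal.continuous_rpow_const (y := p)).measurable).comp hF0m)
          rw [h2]
      _ = IF * IG * IG ^ (r - 1) := by
          rw [lintegral_const_mul _ hGm]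
      _ = IF * IG ^ r := by
          rw [mul_assoc]
          congr 1
          have h3 : IG * IG ^ (r - 1) = IG ^ (1:ℝ) * IG ^ (r - 1) := by
            rw [ENNReal.rpow_one]
          rw [h3, ← ENNReal.rpow_add_of_nonneg 1 (r - 1) zero_le_one (by linarith)]
          congr 1
          ring
  -- the main estimate for an arbitrary set `B` on which `f₀` is dominated
  have hfinal : ∀ B : Set (N n m),
      (∀ w ∈ B, F0 w ≤ ENNReal.ofReal ε * conv w ^ (1/q)) →
      eLpNorm (Set.indicator B fun w : N n m => f (liftN Φ 0 w))
          (ENNReal.ofReal p) volume ≤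
        ENNReal.ofReal ε * IG ^ (1/q) * IF ^ (1/p) := by
    intro B hB
    have hpt1 : ∀ w : N n m,
        (‖(Set.indicator B fun w : N n m => f (liftN Φ 0 w)) w‖₊ : ℝ≥0∞) ^ p ≤
          (ENNReal.ofReal ε) ^ p * conv w ^ r := by
      intro w
      by_cases hw : w ∈ B
      · rw [Set.indicator_of_mem hw]
        have h1 : F0 w ≤ ENNReal.ofReal ε * conv w ^ (1/q) := hB w hw
        show (‖f (liftN Φ 0 w)‖₊ : ℝ≥0∞) ^ p ≤ _
        calc (‖f (liftN Φ 0 w)‖₊ : ℝ≥0∞) ^ p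
            ≤ (ENNReal.ofReal ε * conv w ^ (1/q)) ^ p := ENNReal.rpow_le_rpow h1 hp.le
          _ = (ENNReal.ofReal ε) ^ p * conv w ^ r := by
              rw [ENNReal.mul_rpow_of_nonneg _ _ hp.le, ← ENNReal.rpow_mul,
                show 1/q * p = r by rw [hrdef]; ring]
      · rw [Set.indicator_of_notMem hw]
        simp [ENNReal.zero_rpow_of_pos hp]
    calc eLpNorm (Set.indicator B fun w : N n m => f (liftN Φ 0 w))
          (ENNReal.ofReal p) volume
        = (∫⁻ w, (‖(Set.indicator B fun w : N n m => f (liftN Φ 0 w)) w‖₊ : ℝ≥0∞) ^ p)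
            ^ (1/p) := by
          rw [eLpNorm_eq_lintegral_rpow_enorm_toReal hp0 hpt, hpr]
          rfl
      _ ≤ (∫⁻ w, (ENNReal.ofReal ε) ^ p * conv w ^ r) ^ (1/p) :=
          ENNReal.rpow_le_rpow (lintegral_mono hpt1) (by positivity)
      _ = ((ENNReal.ofReal ε) ^ p * ∫⁻ w, conv w ^ r) ^ (1/p) := by
          rw [lintegral_const_mul' _ _
            (ENNReal.rpow_ne_top_of_nonneg hp.le ENNReal.ofReal_ne_top)]
      _ ≤ ((ENNReal.ofReal ε) ^ p * (IF * IG ^ r)) ^ (1/p) := by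
          gcongr
      _ = ENNReal.ofReal ε * IG ^ (1/q) * IF ^ (1/p) := by
          rw [ENNReal.mul_rpow_of_nonneg _ _ (by positivity : (0:ℝ) ≤ 1/p),
            ENNReal.mul_rpow_of_nonneg _ _ (by positivity : (0:ℝ) ≤ 1/p),
            ← ENNReal.rpow_mul, ← ENNReal.rpow_mul,
            mul_one_div_cancel hp.ne', ENNReal.rpow_one,
            show r * (1/p) = 1/q by rw [hrdef]; field_simp]
          ring
  refine le_trans (hfinal _ ?_) ?_
  · intro w hw
    rw [Set.mem_setOf_eq] at hw
    rw [hA w] at hw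
    exact hw
  · rw [hIFeq]
    calc ENNReal.ofReal ε * IG ^ (1/q) * IF ^ (1/p)
        ≤ ENNReal.ofReal ((IG ^ (1/q)).toReal + 1) * ENNReal.ofReal ε * IF ^ (1/p) := by
          apply mul_le_mul_left
          rw [mul_comm (ENNReal.ofReal ε)]
          exact mul_le_mul_left hCle _
      _ = ENNReal.ofReal (((IG ^ (1/q)).toReal + 1) * ε) * IF ^ (1/p) := by
          rw [ENNReal.ofReal_mul (by positivity)]

end Siegel
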